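/- The extreme points of the simplex B_{d,N} := {(λ₁,…,λ_d) ∈ ℝ^d : λ₁ ≥ λ₂ ≥ … ≥ λ_d ≥ 0 and λ₁+…+λ_d = N} are exactly the d points v_k = (N/k, …, N/k, 0, …, 0) for k = 1, …, d, where the first k coordinates equal N/k and the remaining d−k coordinates are 0. -/

import Mathlib

open Finset

lemma sum_prefix_const (d k : ℕ) (hkd : k ≤ d) (c : ℝ) :
    ∑ i : Fin d, (if (i : ℕ) < k then c else 0) = k * c := by
  rw [Fin.sum_univ_eq_sum_range (fun n => if n < k then c else 0)]
  rw [Finset.range_eq_Ico, ← Finset.sum_Ico_consecutive _ (Nat.zero_le k) hkd]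
  rw [← Finset.range_eq_Ico]
  have h1 : ∑ n ∈ Finset.range k, (if n < k then c else 0) = k * c := by
    rw [Finset.sum_ite_of_true (fun n hn => Finset.mem_range.mp hn)]
    simp [mul_comm]
  have h2 : ∑ n ∈ Finset.Ico k d, (if n < k then c else 0) = 0 := by
    apply Finset.sum_eq_zero
    intro n hn
    rw [if_neg]
    exact not_lt.mpr (Finset.mem_Ico.mp hn).1
  rw [h1, h2, add_zero]

section Main

variable (d : ℕ) (N : ℝ)

def Bset : Set (Fin d → ℝ) :=
  {x : Fin d → ℝ |
    (∀ i j : Fin d, i ≤ j → x j ≤ x i) ∧ (∀ i, 0 ≤ x i) ∧ ∑ i, x i = N}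

def Vset : Set (Fin d → ℝ) :=
  {v : Fin d → ℝ | ∃ k : ℕ, 1 ≤ k ∧ k ≤ d ∧
    v = fun i : Fin d => if (i : ℕ) < k then N / k else 0}

lemma Vset_subset_Bset (hN : 0 < N) : Vset d N ⊆ Bset d N := by
  rintro v ⟨k, hk1, hkd, rfl⟩
  have hk0 : (0:ℝ) < (k:ℝ) := by exact_mod_cast hk1
  refine ⟨?_, ?_, ?_⟩
  · intro i j hij
    by_cases hj : (j : ℕ) < k
    · have hi : (i : ℕ) < k := lt_of_le_of_lt (by exact_mod_cast hij) hj
      simp [hi, hj]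
    · by_cases hi : (i : ℕ) < k <;> simp [hi, hj] <;> positivity
  · intro i
    by_cases hi : (i : ℕ) < k <;> simp [hi] <;> positivity
  · rw [sum_prefix_const d k hkd]
    field_simp

lemma Bset_convex : Convex ℝ (Bset d N) := by
  rintro y ⟨hy1, hy2, hy3⟩ z ⟨hz1, hz2, hz3⟩ a b ha hb hab
  refine ⟨?_, ?_, ?_⟩
  · intro i j hij
    simp only [Pi.add_apply, Pi.smul_apply, smul_eq_mul]
    exact add_le_add (mul_le_mul_of_nonneg_left (hy1 i j hij) ha)
      (mul_le_mul_of_nonneg_left (hz1 i j hij) hb)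
  · intro i
    simp only [Pi.add_apply, Pi.smul_apply, smul_eq_mul]
    exact add_nonneg (mul_nonneg ha (hy2 i)) (mul_nonneg hb (hz2 i))
  · simp only [Pi.add_apply, Pi.smul_apply, smul_eq_mul]
    rw [Finset.sum_add_distrib, ← Finset.mul_sum, ← Finset.mul_sum, hy3, hz3]
    linear_combination N * hab

lemma Bset_subset_hull (hd : 1 ≤ d) (hN : 0 < N) :
    Bset d N ⊆ convexHull ℝ (Vset d N) := by
  rintro x ⟨hx1, hx2, hx3⟩
  -- extended sequence
  set X : ℕ → ℝ := fun n => if h : n < d then x ⟨n, h⟩ else 0 with hX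
  have hXd : X d = 0 := by simp [hX]
  have hXmono : ∀ n, X (n + 1) ≤ X n := by
    intro n
    by_cases h1 : n + 1 < d
    · have h0 : n < d := Nat.lt_of_succ_lt h1
      simp only [hX, dif_pos h1, dif_pos h0]
      exact hx1 ⟨n, h0⟩ ⟨n+1, h1⟩ (by simp [Fin.le_def])
    · by_cases h0 : n < d
      · simp only [hX, dif_neg h1, dif_pos h0]
        exact hx2 _
      · simp [hX, dif_neg h1, dif_neg h0]
  have hXx : ∀ i : Fin d, X i = x i := by
    intro i; simp [hX, i.isLt]
  have hsumX : ∑ n ∈ Finset.range d, X n = N := by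
    rw [← Fin.sum_univ_eq_sum_range X d, ← hx3]
    exact Finset.sum_congr rfl fun i _ => hXx i
  set c : ℕ → ℝ := fun n => (n + 1) * (X n - X (n + 1)) / N with hc
  have hcnn : ∀ n, 0 ≤ c n := by
    intro n
    apply div_nonneg _ hN.le
    apply mul_nonneg (by positivity)
    linarith [hXmono n]
  have hcsum : ∑ n ∈ Finset.range d, c n = 1 := by
    have key : ∑ n ∈ Finset.range d, ((n:ℝ) + 1) * (X n - X (n + 1)) = N := by
      have h1 : ∀ n : ℕ, ((n:ℝ) + 1) * (X n - X (n + 1))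
          = X n - (((n:ℝ)+1) * X (n+1) - (n:ℝ) * X n) := by
        intro n; ring
      calc ∑ n ∈ Finset.range d, ((n:ℝ) + 1) * (X n - X (n + 1))
          = ∑ n ∈ Finset.range d, (X n - (((n:ℝ)+1) * X (n+1) - (n:ℝ) * X n)) := by
            exact Finset.sum_congr rfl fun n _ => h1 n
        _ = ∑ n ∈ Finset.range d, X n
            - ∑ n ∈ Finset.range d, (((n:ℝ)+1) * X (n+1) - (n:ℝ) * X n) := by
            rw [Finset.sum_sub_distrib]
        _ = N := by
            have := Finset.sum_range_sub (fun n => (n:ℝ) * X n) d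
            simp only [Nat.cast_add, Nat.cast_one] at this
            rw [hsumX, this, hXd]
            ring
    simp only [hc]
    rw [← Finset.sum_div, key, div_self hN.ne']
  -- x is convex combination
  have hxeq : x = ∑ n ∈ Finset.range d,
      c n • (fun i : Fin d => if (i:ℕ) < n + 1 then N / (n+1) else 0) := by
    funext i
    rw [Finset.sum_apply]
    have hterm : ∀ n ∈ Finset.range d,
        (c n • fun i : Fin d => if (i:ℕ) < n + 1 then N / (n+1) else 0) i
        = if (i:ℕ) ≤ n then X n - X (n+1) else 0 := by
      intro n _
      simp only [Pi.smul_apply, smul_eq_mul, hc]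
      by_cases h : (i:ℕ) < n + 1
      · rw [if_pos h, if_pos (Nat.lt_succ_iff.mp h)]
        field_simp
      · rw [if_neg h, if_neg (fun hh => h (Nat.lt_succ_iff.mpr hh)), mul_zero]
    rw [Finset.sum_congr rfl hterm]
    have hfil : ∑ n ∈ Finset.range d, (if (i:ℕ) ≤ n then X n - X (n+1) else 0)
        = ∑ n ∈ Finset.Ico (i:ℕ) d, (X n - X (n+1)) := by
      rw [← Finset.sum_filter]
      congr 1
      ext n
      simp only [Finset.mem_filter, Finset.mem_range, Finset.mem_Ico]
      tauto
    rw [hfil, Finset.sum_Ico_eq_sub _ (le_of_lt i.isLt)]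
    rw [Finset.sum_range_sub' X d, Finset.sum_range_sub' X (i:ℕ), hXd]
    rw [hXx i]
    ring
  rw [hxeq]
  apply (convex_convexHull ℝ (Vset d N)).sum_mem (fun n _ => hcnn n) hcsum
  intro n hn
  apply subset_convexHull
  refine ⟨n + 1, Nat.le_add_left 1 n, Finset.mem_range.mp hn, ?_⟩
  push_cast
  rfl

lemma Vset_extreme (hN : 0 < N) :
    Vset d N ⊆ Set.extremePoints ℝ (Bset d N) := by
  rintro v ⟨k, hk1, hkd, rfl⟩
  have hk0 : (0:ℝ) < (k:ℝ) := by exact_mod_cast hk1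
  set v : Fin d → ℝ := fun i : Fin d => if (i : ℕ) < k then N / k else 0 with hv
  refine ⟨Vset_subset_Bset d N hN ⟨k, hk1, hkd, rfl⟩, ?_⟩
  rintro y hy z hz ⟨a, b, ha, hb, hab, habv⟩
  obtain ⟨hy1, hy2, hy3⟩ := hy
  obtain ⟨hz1, hz2, hz3⟩ := hz
  have hcoord : ∀ i : Fin d, a * y i + b * z i = v i := by
    intro i
    have := congrFun habv i
    simpa using this
  -- indices 0 and k-1
  have h0d : 0 < d := hk1.trans hkd
  have hk1d : k - 1 < d := lt_of_lt_of_le (Nat.pred_lt (Nat.one_le_iff_ne_zero.mp hk1)) hkd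
  set i0 : Fin d := ⟨0, h0d⟩ with hi0
  set i1 : Fin d := ⟨k - 1, hk1d⟩ with hi1
  -- tail zeros
  have htail : ∀ i : Fin d, ¬ ((i:ℕ) < k) → y i = 0 ∧ z i = 0 := by
    intro i hi
    have hvi : v i = 0 := by simp [hv, hi]
    have h := hcoord i
    rw [hvi] at h
    have h1 : 0 ≤ a * y i := mul_nonneg ha.le (hy2 i)
    have h2 : 0 ≤ b * z i := mul_nonneg hb.le (hz2 i)
    constructor
    · have : a * y i = 0 := by linarith
      rcases mul_eq_zero.mp this with h' | h'
      · exact absurd h' ha.ne'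
      · exact h'
    · have : b * z i = 0 := by linarith
      rcases mul_eq_zero.mp this with h' | h'
      · exact absurd h' hb.ne'
      · exact h'
  -- y constant on prefix
  have hi0k : ((i0:ℕ)) < k := by simp [hi0]; omega
  have hi1k : ((i1:ℕ)) < k := by simp only [hi1]; omega
  have hi01 : i0 ≤ i1 := by rw [Fin.le_def]; simp [hi0]
  have hyflat : y i1 = y i0 := by
    by_contra hne
    have hle : y i1 ≤ y i0 := hy1 i0 i1 hi01
    have hlt : y i1 < y i0 := lt_of_le_of_ne hle hne
    have hv0 : v i0 = N / k := by simp [hv, hi0k]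
    have hv1 : v i1 = N / k := by simp [hv, hi1k]
    have h0 := hcoord i0
    have h1 := hcoord i1
    rw [hv0] at h0; rw [hv1] at h1
    have hz01 : z i1 ≤ z i0 := hz1 i0 i1 hi01
    nlinarith
  have hyconst : ∀ i : Fin d, (i:ℕ) < k → y i = y i0 := by
    intro i hik
    have h1 : y i ≤ y i0 := hy1 i0 i (by rw [Fin.le_def]; simp [hi0])
    have h2 : y i1 ≤ y i := hy1 i i1 (by rw [Fin.le_def]; simp only [hi1]; omega)
    linarith [hyflat]
  -- value from sum
  have hysum : ∑ i, y i = (k:ℝ) * y i0 := by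
    rw [← sum_prefix_const d k hkd (y i0)]
    apply Finset.sum_congr rfl
    intro i _
    by_cases hik : (i:ℕ) < k
    · rw [if_pos hik, hyconst i hik]
    · rw [if_neg hik, (htail i hik).1]
  have hy0 : y i0 = N / k := by
    rw [hy3] at hysum
    field_simp at hysum ⊢
    linarith
  have hyv : y = v := by
    funext i
    by_cases hik : (i:ℕ) < k
    · rw [hyconst i hik, hy0]; simp [hv, hik]
    · rw [(htail i hik).1]; simp [hv, hik]
  have hzv : z = v := by
    funext i
    have h := hcoord i
    rw [congrFun hyv i] at h
    by_cases hik : (i:ℕ) < k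
    · have hvi : v i = N / k := by simp [hv, hik]
      rw [hvi] at h ⊢
      have : b * z i = b * (N / (k:ℝ)) := by linear_combination h - (N / (k:ℝ)) * hab
      exact mul_left_cancel₀ hb.ne' this
    · rw [(htail i hik).2]; simp [hv, hik]
  exact hyv

end Main

/-- The extreme points of the bosonic simplex
`B_{d,N} = {λ ∈ ℝ^d : λ₁ ≥ … ≥ λ_d ≥ 0, ∑ λᵢ = N}` are exactly the `d` points
`v_k = (N/k, …, N/k, 0, …, 0)` (first `k` coordinates `N/k`), `k = 1, …, d`. -/
theorem extremePoints_bosonic_simplex (d : ℕ) (hd : 1 ≤ d) (N : ℝ) (hN : 0 < N) :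
    Set.extremePoints ℝ
        {x : Fin d → ℝ |
          (∀ i j : Fin d, i ≤ j → x j ≤ x i) ∧ (∀ i, 0 ≤ x i) ∧ ∑ i, x i = N}
      = {v : Fin d → ℝ | ∃ k : ℕ, 1 ≤ k ∧ k ≤ d ∧
          v = fun i : Fin d => if (i : ℕ) < k then N / k else 0} := by
  have hBV : Bset d N = convexHull ℝ (Vset d N) :=
    le_antisymm (Bset_subset_hull d N hd hN)
      (convexHull_min (Vset_subset_Bset d N hN) (Bset_convex d N))
  apply le_antisymm
  · intro x hx
    have : x ∈ Set.extremePoints ℝ (convexHull ℝ (Vset d N)) := by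
      rw [← hBV]; exact hx
    exact extremePoints_convexHull_subset this
  · exact Vset_extreme d N hN
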